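/- Let C ⊆ ℝ^n be a full-dimensional salient polyhedral cone with set of extremal rays R, and for r ∈ R let φ_r denote the quotient map ℝ^n → ℝ^n/span(r). If L ⊆ R satisfies: for every r ∈ L and every extremal ray s of the polyhedral cone φ_r(C) there exists r' ∈ L with φ_r(r') = s, and L is nonempty, then L = R. -/

import Mathlib

open Finset

/-- The convex cone generated by a set: all finite nonnegative linear combinations. -/
def coneGen {V : Type*} [AddCommGroup V] [Module ℝ V] (S : Set V) : Set V :=
  {x | ∃ (n : ℕ) (c : Fin n → ℝ) (v : Fin n → V),
    (∀ i, 0 ≤ c i) ∧ (∀ i, v i ∈ S) ∧ x = ∑ i, c i • v i}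

/-- A cone is salient if it contains no line. -/
def IsSalient {V : Type*} [AddCommGroup V] [Module ℝ V] (C : Set V) : Prop :=
  ∀ x ∈ C, -x ∈ C → x = 0

/-- A nonzero vector spans an extremal ray of the cone `C`. -/
def IsExtremalVec {V : Type*} [AddCommGroup V] [Module ℝ V] (C : Set V) (v : V) : Prop :=
  v ≠ 0 ∧ v ∈ C ∧ ∀ x y, x ∈ C → y ∈ C → v = x + y →
    (∃ a : ℝ, 0 ≤ a ∧ x = a • v) ∧ (∃ b : ℝ, 0 ≤ b ∧ y = b • v)

section Aux

local notation "R0" => {c : ℝ // 0 ≤ c}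

variable {V : Type*} [AddCommGroup V] [Module ℝ V]

theorem coneGen_eq_span (S : Set V) :
    coneGen S = (Submodule.span R0 S : Set V) := by
  ext x
  constructor
  · rintro ⟨n, c, v, hc, hv, rfl⟩
    exact Submodule.sum_mem _ fun i _ =>
      Submodule.smul_mem _ (⟨c i, hc i⟩ : R0) (Submodule.subset_span (hv i))
  · intro hx
    obtain ⟨c, hsupp, rfl⟩ := Submodule.mem_span_set.mp hx
    classical
    refine ⟨c.support.card, fun i => ((c (c.support.equivFin.symm i) : R0) : ℝ),
      fun i => (c.support.equivFin.symm i : V), fun i => (c _).2,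
      fun i => hsupp (c.support.equivFin.symm i).2, ?_⟩
    rw [Finsupp.sum]
    rw [← Finset.sum_coe_sort c.support (fun a => c a • (a : V))]
    rw [← Equiv.sum_comp c.support.equivFin.symm (fun a => c a • (a : V))]
    rfl

theorem mem_coneGen_finset {S : Set V} {x : V} (hx : x ∈ coneGen S) :
    ∃ (F : Finset V) (c : V → ℝ), ↑F ⊆ S ∧ (∀ q, 0 ≤ c q) ∧ x = ∑ q ∈ F, c q • q := by
  rw [coneGen_eq_span] at hx
  obtain ⟨c, hsupp, rfl⟩ := Submodule.mem_span_set.mp hx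
  refine ⟨c.support, fun q => ((c q : R0) : ℝ), hsupp, fun q => (c q).2, ?_⟩
  rw [Finsupp.sum]
  exact Finset.sum_congr rfl fun q _ => rfl

theorem coneGen_mono {S T : Set V} (h : S ⊆ T) : coneGen S ⊆ coneGen T := by
  rw [coneGen_eq_span, coneGen_eq_span]
  exact Submodule.span_mono h

theorem zero_mem_coneGen (S : Set V) : (0 : V) ∈ coneGen S := by
  rw [coneGen_eq_span]; exact (Submodule.span R0 S).zero_mem

theorem subset_coneGen (S : Set V) : S ⊆ coneGen S := by
  rw [coneGen_eq_span]; exact Submodule.subset_span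

theorem add_mem_coneGen {S : Set V} {x y : V} (hx : x ∈ coneGen S) (hy : y ∈ coneGen S) :
    x + y ∈ coneGen S := by
  rw [coneGen_eq_span] at *
  exact (Submodule.span R0 S).add_mem hx hy

theorem smul_mem_coneGen {S : Set V} {t : ℝ} (ht : 0 ≤ t) {x : V} (hx : x ∈ coneGen S) :
    t • x ∈ coneGen S := by
  rw [coneGen_eq_span] at *
  exact (Submodule.span R0 S).smul_mem ⟨t, ht⟩ hx

theorem sum_mem_coneGen {S : Set V} {ι : Type*} {F : Finset ι} {f : ι → V}
    (hf : ∀ i ∈ F, f i ∈ coneGen S) : ∑ i ∈ F, f i ∈ coneGen S := by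
  rw [coneGen_eq_span] at *
  exact Submodule.sum_mem _ fun i hi => hf i hi

/-- If `w` is extremal in `C` and lies in a subcone `coneGen T ⊆ C`, then some element of `T`
is a positive multiple of `w`. -/
theorem extremal_exists_generator {C T : Set V} (hTC : coneGen T ⊆ C) {w : V}
    (hw : IsExtremalVec C w) (hwT : w ∈ coneGen T) :
    ∃ q ∈ T, ∃ u : ℝ, 0 < u ∧ q = u • w := by
  classical
  obtain ⟨F, c, hFT, hc, hrep⟩ := mem_coneGen_finset hwT
  have key : ∀ q ∈ F, ∃ a : ℝ, 0 ≤ a ∧ c q • q = a • w := by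
    intro q hq
    have h1 : c q • q ∈ C := hTC (smul_mem_coneGen (hc q) (subset_coneGen T (hFT hq)))
    have h2 : ∑ p ∈ F.erase q, c p • p ∈ C := hTC (sum_mem_coneGen fun p hp =>
      smul_mem_coneGen (hc p) (subset_coneGen T (hFT (Finset.mem_of_mem_erase hp))))
    have hsplit : w = c q • q + ∑ p ∈ F.erase q, c p • p := by
      rw [hrep, ← Finset.add_sum_erase _ _ hq]
    exact (hw.2.2 _ _ h1 h2 hsplit).1
  choose! a ha0 ha using key
  have hsum : (∑ q ∈ F, a q) • w = w := by
    conv_rhs => rw [hrep]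
    rw [Finset.sum_smul]
    exact Finset.sum_congr rfl fun q hq => (ha q hq).symm
  have hone : ∑ q ∈ F, a q = 1 := by
    by_contra h
    have : (∑ q ∈ F, a q - 1) • w = 0 := by
      rw [sub_smul, one_smul, hsum, sub_self]
    rcases smul_eq_zero.mp this with h' | h'
    · exact h (by linarith [sub_eq_zero.mp h'])
    · exact hw.1 h'
  have hex : ∃ q ∈ F, 0 < a q := by
    by_contra h
    push_neg at h
    have : ∑ q ∈ F, a q ≤ 0 := Finset.sum_nonpos fun q hq => h q hq
    linarith
  obtain ⟨q, hqF, hq⟩ := hex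
  have hcq : 0 < c q := by
    rcases lt_or_eq_of_le (hc q) with h | h
    · exact h
    · exfalso
      have := ha q hqF
      rw [← h, zero_smul] at this
      exact hw.1 (by
        have : a q • w = 0 := this.symm
        rcases smul_eq_zero.mp this with h' | h'
        · exact absurd h' (ne_of_gt hq)
        · exact h')
  refine ⟨q, hFT hqF, a q / c q, div_pos hq hcq, ?_⟩
  have := ha q hqF
  calc q = (c q)⁻¹ • (c q • q) := by rw [smul_smul, inv_mul_cancel₀ (ne_of_gt hcq), one_smul]
  _ = (c q)⁻¹ • (a q • w) := by rw [this]
  _ = (a q / c q) • w := by rw [smul_smul, div_eq_inv_mul]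

/-- Minkowski: a salient finitely generated cone is generated by its extremal vectors. -/
theorem coneGen_subset_coneGen_extremal (S : Finset V)
    (hsal : IsSalient (coneGen (S : Set V))) :
    coneGen (S : Set V) ⊆ coneGen {w | IsExtremalVec (coneGen (S : Set V)) w} := by
  classical
  induction S using Finset.strongInduction with
  | _ S ih =>
  by_cases hrem : ∃ s ∈ S, s ∈ coneGen ((S.erase s : Finset V) : Set V)
  · obtain ⟨s, hsS, hs⟩ := hrem
    have hins : (S : Set V) = insert s ((S.erase s : Finset V) : Set V) := by
      rw [← Finset.coe_insert, Finset.insert_erase hsS]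
    have hspan : coneGen (S : Set V) = coneGen ((S.erase s : Finset V) : Set V) := by
      have hsp : Submodule.span {c : ℝ // 0 ≤ c} (insert s ((S.erase s : Finset V) : Set V)) =
          Submodule.span {c : ℝ // 0 ≤ c} ((S.erase s : Finset V) : Set V) :=
        Submodule.span_insert_eq_span
          (by rw [← SetLike.mem_coe, ← coneGen_eq_span]; exact hs)
      rw [hins, coneGen_eq_span, coneGen_eq_span, hsp]
    rw [hspan] at hsal ⊢
    exact ih (S.erase s) (Finset.erase_ssubset hsS) hsal
  · push_neg at hrem
    have hext : (S : Set V) ⊆ {w | IsExtremalVec (coneGen (S : Set V)) w} := by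
      intro s₀ hs₀
      have hs₀S : s₀ ∈ S := hs₀
      have hnotin := hrem s₀ hs₀S
      have hs₀ne : s₀ ≠ 0 := by
        intro h
        exact hnotin (h ▸ zero_mem_coneGen _)
      refine ⟨hs₀ne, subset_coneGen _ hs₀, ?_⟩
      intro x y hx hy hxy
      -- decompose x and y along s₀ and the rest
      have hdec : ∀ z ∈ coneGen (S : Set V), ∃ (a : ℝ) (z' : V), 0 ≤ a ∧
          z' ∈ coneGen ((S.erase s₀ : Finset V) : Set V) ∧ z = a • s₀ + z' := by
        intro z hz
        rw [coneGen_eq_span] at hz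
        have hSu : (S : Set V) = {s₀} ∪ ((S.erase s₀ : Finset V) : Set V) := by
          rw [Set.singleton_union, ← Finset.coe_insert, Finset.insert_erase hs₀S]
        rw [hSu, Submodule.span_union] at hz
        obtain ⟨p, hp, q, hq, hpq⟩ := Submodule.mem_sup.mp hz
        obtain ⟨a, ha⟩ := Submodule.mem_span_singleton.mp hp
        refine ⟨(a : ℝ), q, a.2, by rw [coneGen_eq_span]; exact hq, ?_⟩
        rw [← hpq, ← ha]
        rfl
      obtain ⟨a, x', ha, hx', hxd⟩ := hdec x hx
      obtain ⟨b, y', hb, hy', hyd⟩ := hdec y hy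
      have herase_sub : coneGen ((S.erase s₀ : Finset V) : Set V) ⊆ coneGen (S : Set V) :=
        coneGen_mono (by exact_mod_cast Finset.erase_subset _ _)
      have hkey : x' + y' = (1 - (a + b)) • s₀ := by
        have h : s₀ = a • s₀ + x' + (b • s₀ + y') := by
          rw [hxd] at hxy; rw [hyd] at hxy; exact hxy
        rw [sub_smul, one_smul, add_smul, eq_sub_iff_add_eq]
        conv_rhs => rw [h]
        abel
      have hab : a + b = 1 ∧ x' = 0 ∧ y' = 0 := by
        rcases lt_trichotomy (a + b) 1 with h | h | h
        · exfalso
          have heq : s₀ = (1 - (a+b))⁻¹ • (x' + y') := by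
            rw [hkey, smul_smul, inv_mul_cancel₀ (by intro hz; rw [sub_eq_zero] at hz; linarith),
              one_smul]
          have hmem : (1 - (a+b))⁻¹ • (x' + y') ∈ coneGen ((S.erase s₀ : Finset V) : Set V) :=
            smul_mem_coneGen (inv_nonneg.mpr (by linarith)) (add_mem_coneGen hx' hy')
          exact hnotin (heq.symm ▸ hmem)
        · have h0 : x' + y' = 0 := by rw [hkey, h, sub_self, zero_smul]
          have hx0 : x' = 0 := hsal x' (herase_sub hx') (by
            rw [neg_eq_of_add_eq_zero_right h0]
            exact herase_sub hy')
          refine ⟨h, hx0, ?_⟩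
          rw [hx0, zero_add] at h0; exact h0
        · exfalso
          have h1 : x' + y' ∈ coneGen (S : Set V) :=
            add_mem_coneGen (herase_sub hx') (herase_sub hy')
          have h2 : -(x' + y') ∈ coneGen (S : Set V) := by
            rw [hkey, ← neg_smul]
            have : -(1 - (a+b)) = (a+b) - 1 := by ring
            rw [this]
            exact smul_mem_coneGen (by linarith) (subset_coneGen _ hs₀)
          have h0 := hsal _ h1 h2
          rw [hkey] at h0
          rcases smul_eq_zero.mp h0 with h' | h'
          · linarith [sub_eq_zero.mp h']
          · exact hs₀ne h'
      obtain ⟨_, hx0, hy0⟩ := hab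
      exact ⟨⟨a, ha, by rw [hxd, hx0, add_zero]⟩, ⟨b, hb, by rw [hyd, hy0, add_zero]⟩⟩
    exact coneGen_mono hext

/-- The image of a salient cone under the quotient by an extremal ray is salient. -/
theorem salient_quotient {S : Set V} (hsal : IsSalient (coneGen S)) {r : V}
    (hr : IsExtremalVec (coneGen S) r) :
    IsSalient ((Submodule.span ℝ {r}).mkQ '' coneGen S) := by
  rintro q ⟨x, hx, rfl⟩ ⟨y, hy, hyq⟩
  have hxy : (Submodule.span ℝ {r}).mkQ (x + y) = 0 := by
    rw [map_add, hyq]; abel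
  have hmem : x + y ∈ Submodule.span ℝ ({r} : Set V) := by
    rwa [← Submodule.Quotient.mk_eq_zero, ← Submodule.mkQ_apply]
  obtain ⟨γ, hγ⟩ := Submodule.mem_span_singleton.mp hmem
  have hx0 : (Submodule.span ℝ {r}).mkQ x = 0 := by
    rcases lt_trichotomy γ 0 with h | h | h
    · -- x + y and -(x+y) both in the cone, so x + y = 0, then x = 0
      have h1 : x + y ∈ coneGen S := add_mem_coneGen hx hy
      have h2 : -(x + y) ∈ coneGen S := by
        rw [← hγ, ← neg_smul]
        exact smul_mem_coneGen (by linarith) hr.2.1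
      have h0 := hsal _ h1 h2
      have hxey : x = -y := by
        rw [← neg_eq_of_add_eq_zero_left h0]
      have : x = 0 := hsal x hx (by rw [hxey, neg_neg]; exact hy)
      rw [this, map_zero]
    · have h0 : x + y = 0 := by rw [← hγ, h, zero_smul]
      have : x = 0 := hsal x hx (by rw [neg_eq_of_add_eq_zero_right h0]; exact hy)
      rw [this, map_zero]
    · -- r = γ⁻¹ • x + γ⁻¹ • y, use extremality of r
      have hrsum : r = γ⁻¹ • x + γ⁻¹ • y := by
        rw [← smul_add, ← hγ, smul_smul, inv_mul_cancel₀ (ne_of_gt h), one_smul]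
      obtain ⟨⟨a, _, hax⟩, -⟩ := hr.2.2 _ _ (smul_mem_coneGen (inv_nonneg.mpr h.le) hx)
        (smul_mem_coneGen (inv_nonneg.mpr h.le) hy) hrsum
      have hxar : x = (γ * a) • r := by
        have : γ • (γ⁻¹ • x) = γ • (a • r) := by rw [hax]
        rwa [smul_smul, mul_inv_cancel₀ (ne_of_gt h), one_smul, smul_smul] at this
      rw [hxar, map_smul]
      have : (Submodule.span ℝ {r}).mkQ r = 0 := by
        rw [Submodule.mkQ_apply, Submodule.Quotient.mk_eq_zero]
        exact Submodule.mem_span_singleton_self r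
      rw [this, smul_zero]
  rw [hx0]

end Aux

section Normed

variable {W : Type*} [NormedAddCommGroup W] [NormedSpace ℝ W]

/-- A salient finitely generated cone admits a strictly positive linear functional. -/
theorem exists_pos_functional {S : Set W} (hS : S.Finite)
    (hsal : IsSalient (coneGen S)) :
    ∃ l : W →L[ℝ] ℝ, ∀ x ∈ coneGen S, x ≠ 0 → 0 < l x := by
  classical
  set N : W → W := fun s => ‖s‖⁻¹ • s with hN
  set D := convexHull ℝ (N '' (S \ {0})) with hD
  have hDfin : (N '' (S \ {0})).Finite := (hS.subset Set.diff_subset).image N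
  have hDclosed : IsClosed D := (hDfin.isCompact_convexHull ℝ).isClosed
  have hzmem : ∀ z ∈ N '' (S \ {0}), z ∈ coneGen S ∧ z ≠ 0 := by
    rintro z ⟨s, ⟨hsS, hs0⟩, rfl⟩
    have hs0' : s ≠ 0 := hs0
    refine ⟨smul_mem_coneGen (inv_nonneg.mpr (norm_nonneg s)) (subset_coneGen S hsS), ?_⟩
    exact smul_ne_zero (inv_ne_zero (norm_ne_zero_iff.mpr hs0')) hs0'
  have h0D : (0 : W) ∉ D := by
    intro h0
    rw [hD, _root_.convexHull_eq] at h0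
    obtain ⟨ι, t, w, z, hw, hw1, hz, hcm⟩ := h0
    rw [Finset.centerMass_eq_of_sum_1 _ _ hw1] at hcm
    have hwz : ∀ i ∈ t, w i = 0 := by
      intro i hi
      have h1 : w i • z i ∈ coneGen S :=
        smul_mem_coneGen (hw i hi) (hzmem _ (hz i hi)).1
      have h2 : -(w i • z i) ∈ coneGen S := by
        have hsplit : w i • z i + ∑ x ∈ t.erase i, w x • z x = 0 := by
          have h := Finset.add_sum_erase t (fun j => w j • z j) hi
          rw [hcm] at h
          exact h
        rw [neg_eq_of_add_eq_zero_right hsplit]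
        exact sum_mem_coneGen fun j hj =>
          smul_mem_coneGen (hw j (Finset.mem_of_mem_erase hj))
            (hzmem _ (hz j (Finset.mem_of_mem_erase hj))).1
      have := hsal _ h1 h2
      rcases smul_eq_zero.mp this with h | h
      · exact h
      · exact absurd h (hzmem _ (hz i hi)).2
    rw [Finset.sum_eq_zero hwz] at hw1
    exact one_ne_zero hw1.symm
  obtain ⟨f, u, hu0, hub⟩ :=
    geometric_hahn_banach_point_closed (convex_convexHull ℝ _) hDclosed h0D
  rw [map_zero] at hu0
  refine ⟨f, ?_⟩
  intro x hx hx0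
  obtain ⟨F, c, hFS, hc, hrep⟩ := mem_coneGen_finset hx
  have hfq : ∀ q ∈ F, 0 ≤ c q * f q := by
    intro q hq
    by_cases h : q = 0
    · simp [h]
    · have : (0:ℝ) < f q := by
        have hNq : N q ∈ D := subset_convexHull ℝ _ ⟨q, ⟨hFS hq, h⟩, rfl⟩
        have : f q = ‖q‖ * f (N q) := by
          conv_lhs => rw [show q = ‖q‖ • N q by
            rw [hN]; simp only []; rw [smul_smul,
              mul_inv_cancel₀ (norm_ne_zero_iff.mpr h), one_smul]]
          rw [map_smul, smul_eq_mul]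
        rw [this]
        exact mul_pos (norm_pos_iff.mpr h) (lt_trans hu0 (hub _ hNq))
      exact mul_nonneg (hc q) this.le
  have hxsum : f x = ∑ q ∈ F, c q * f q := by
    rw [hrep, map_sum]
    exact Finset.sum_congr rfl fun q _ => by rw [map_smul, smul_eq_mul]
  rw [hxsum]
  apply Finset.sum_pos' hfq
  have hexq : ∃ q ∈ F, c q • q ≠ 0 := by
    by_contra h
    push_neg at h
    exact hx0 (by rw [hrep, Finset.sum_eq_zero h])
  obtain ⟨q, hqF, hq⟩ := hexq
  have hcq : 0 < c q := (hc q).lt_of_ne fun h => hq (by rw [← h, zero_smul])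
  have hq0 : q ≠ 0 := fun h => hq (by rw [h, smul_zero])
  refine ⟨q, hqF, ?_⟩
  have hNq : N q ∈ D := subset_convexHull ℝ _ ⟨q, ⟨hFS hqF, hq0⟩, rfl⟩
  have hfqpos : (0:ℝ) < f q := by
    have : f q = ‖q‖ * f (N q) := by
      conv_lhs => rw [show q = ‖q‖ • N q by
        rw [hN]; simp only []; rw [smul_smul,
          mul_inv_cancel₀ (norm_ne_zero_iff.mpr hq0), one_smul]]
      rw [map_smul, smul_eq_mul]
    rw [this]
    exact mul_pos (norm_pos_iff.mpr hq0) (lt_trans hu0 (hub _ hNq))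
  exact mul_pos hcq hfqpos

/-- An extremal vector of a salient finitely generated cone is exposed by a linear functional. -/
theorem exists_exposing {S : Set W} (hS : S.Finite)
    (hsal : IsSalient (coneGen S)) (l : W →L[ℝ] ℝ)
    (hl : ∀ x ∈ coneGen S, x ≠ 0 → 0 < l x) {v : W} (hv : IsExtremalVec (coneGen S) v) :
    ∃ g : W →L[ℝ] ℝ, 0 < g v ∧ ∀ x ∈ coneGen S,
      g x * l v ≤ g v * l x ∧ (g x * l v = g v * l x → ∃ t : ℝ, 0 ≤ t ∧ x = t • v) := by
  classical
  have hlv : 0 < l v := hl v hv.2.1 hv.1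
  set S' : Set W := {s ∈ S | ¬ ∃ t : ℝ, 0 ≤ t ∧ s = t • v} with hS'
  have hS'S : S' ⊆ S := Set.sep_subset _ _
  have hS'C : coneGen S' ⊆ coneGen S := coneGen_mono hS'S
  have hlS' : ∀ s ∈ S', 0 < l s := by
    intro s hs
    refine hl s (subset_coneGen S (hS'S hs)) fun h => hs.2 ⟨0, le_refl 0, by rw [h, zero_smul]⟩
  have hvnot : v ∉ coneGen S' := by
    intro hmem
    obtain ⟨q, hqS', u, hu, hq⟩ := extremal_exists_generator hS'C hv hmem
    exact hqS'.2 ⟨u, hu.le, hq⟩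
  set Nl : W → W := fun s => (l s)⁻¹ • s with hNl
  set D := convexHull ℝ (Nl '' S') with hD
  have hDclosed : IsClosed D := (((hS.subset hS'S).image Nl).isCompact_convexHull ℝ).isClosed
  have hvhat : (l v)⁻¹ • v ∉ D := by
    intro h
    rw [hD, _root_.convexHull_eq] at h
    obtain ⟨ι, t, w, z, hw, hw1, hz, hcm⟩ := h
    rw [Finset.centerMass_eq_of_sum_1 _ _ hw1] at hcm
    apply hvnot
    have hveq : v = (l v) • ((l v)⁻¹ • v) := by
      rw [smul_smul, mul_inv_cancel₀ (ne_of_gt hlv), one_smul]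
    rw [hveq, ← hcm, Finset.smul_sum]
    refine sum_mem_coneGen fun i hi => ?_
    obtain ⟨s, hsS', hzi⟩ := hz i hi
    rw [← hzi, smul_smul]
    refine smul_mem_coneGen (mul_nonneg hlv.le (hw i hi)) ?_
    rw [hNl]
    exact smul_mem_coneGen (inv_nonneg.mpr (hlS' s hsS').le) (subset_coneGen _ hsS')
  obtain ⟨f, u, hfD, hfv⟩ :=
    geometric_hahn_banach_closed_point (convex_convexHull ℝ _) hDclosed hvhat
  set g : W →L[ℝ] ℝ := f - u • l with hg
  have hgval : ∀ x : W, g x = f x - u * l x := fun x => rfl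
  have hgv : 0 < g v := by
    have hfveq : f v = l v * f ((l v)⁻¹ • v) := by
      conv_lhs => rw [show v = (l v) • ((l v)⁻¹ • v) by
        rw [smul_smul, mul_inv_cancel₀ (ne_of_gt hlv), one_smul]]
      rw [map_smul, smul_eq_mul]
    rw [hgval, hfveq]
    have : u < f ((l v)⁻¹ • v) := hfv
    nlinarith
  have hgS' : ∀ s ∈ S', g s < 0 := by
    intro s hs
    have hls : 0 < l s := hlS' s hs
    have hfs : f ((l s)⁻¹ • s) < u := hfD _ (subset_convexHull ℝ _ ⟨s, hs, rfl⟩)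
    have hfseq : f s = l s * f ((l s)⁻¹ • s) := by
      conv_lhs => rw [show s = (l s) • ((l s)⁻¹ • s) by
        rw [smul_smul, mul_inv_cancel₀ (ne_of_gt hls), one_smul]]
      rw [map_smul, smul_eq_mul]
    rw [hgval, hfseq]
    nlinarith
  -- the submodule of points where g is nonpositive, and zero only at 0
  set Dsub : Submodule {c : ℝ // 0 ≤ c} W :=
    { carrier := {x | g x ≤ 0 ∧ (g x = 0 → x = 0)}
      add_mem' := by
        rintro p q ⟨hp1, hp2⟩ ⟨hq1, hq2⟩
        refine ⟨by rw [map_add]; linarith, fun h => ?_⟩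
        rw [map_add] at h
        have hp0 : g p = 0 := by linarith
        have hq0 : g q = 0 := by linarith
        rw [hp2 hp0, hq2 hq0, add_zero]
      zero_mem' := ⟨by rw [map_zero], fun _ => rfl⟩
      smul_mem' := by
        rintro c x ⟨hx1, hx2⟩
        have hcs : c • x = (c : ℝ) • x := rfl
        refine ⟨?_, ?_⟩
        · show g (c • x) ≤ 0
          rw [hcs, map_smul, smul_eq_mul]
          exact mul_nonpos_iff.mpr (Or.inl ⟨c.2, hx1⟩)
        · intro h
          show c • x = 0
          rw [hcs]
          have : (c : ℝ) * g x = 0 := by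
            rw [← smul_eq_mul, ← map_smul, ← hcs]
            exact h
          rcases mul_eq_zero.mp this with h' | h'
          · rw [h', zero_smul]
          · rw [hx2 h', smul_zero] } with hDsub
  have hS'Dsub : Submodule.span {c : ℝ // 0 ≤ c} S' ≤ Dsub :=
    Submodule.span_le.mpr fun s hs => ⟨(hgS' s hs).le, fun h => absurd h (ne_of_lt (hgS' s hs))⟩
  refine ⟨g, hgv, ?_⟩
  intro x hx
  have hSsplit : S = {s ∈ S | ∃ t : ℝ, 0 ≤ t ∧ s = t • v} ∪ S' := by
    ext s
    constructor
    · intro hs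
      by_cases h : ∃ t : ℝ, 0 ≤ t ∧ s = t • v
      · exact Or.inl ⟨hs, h⟩
      · exact Or.inr ⟨hs, h⟩
    · rintro (⟨h, -⟩ | ⟨h, -⟩) <;> exact h
  rw [coneGen_eq_span, hSsplit, Submodule.span_union, SetLike.mem_coe] at hx
  obtain ⟨p, hp, y, hy, hpy⟩ := Submodule.mem_sup.mp hx
  have hp' : p ∈ Submodule.span {c : ℝ // 0 ≤ c} ({v} : Set W) := by
    refine Submodule.span_le.mpr ?_ hp
    rintro s ⟨hsS, t, ht, rfl⟩
    exact Submodule.mem_span_singleton.mpr ⟨⟨t, ht⟩, rfl⟩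
  obtain ⟨a, ha⟩ := Submodule.mem_span_singleton.mp hp'
  have hyD : g y ≤ 0 ∧ (g y = 0 → y = 0) := hS'Dsub hy
  have hyC : y ∈ coneGen S := by
    rw [coneGen_eq_span]
    exact Submodule.span_mono hS'S hy
  have hly : 0 ≤ l y := by
    rcases eq_or_ne y 0 with h | h
    · rw [h, map_zero]
    · exact (hl y hyC h).le
  have hxd : x = (a : ℝ) • v + y := by
    rw [← hpy, ← ha]
    rfl
  have hgx : g x = (a : ℝ) * g v + g y := by rw [hxd, map_add, map_smul, smul_eq_mul]
  have hlx : l x = (a : ℝ) * l v + l y := by rw [hxd, map_add, map_smul, smul_eq_mul]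
  have hkey : g x * l v - g v * l x = g y * l v - g v * l y := by
    rw [hgx, hlx]; ring
  constructor
  · nlinarith [hyD.1, hly, hlv, hgv]
  · intro heq
    have h0 : g y * l v - g v * l y = 0 := by rw [← hkey]; linarith
    have h1 : g y * l v ≤ 0 := mul_nonpos_iff.mpr (Or.inr ⟨hyD.1, hlv.le⟩)
    have h2 : 0 ≤ g v * l y := mul_nonneg hgv.le hly
    have hgy0 : g y * l v = 0 := by linarith
    have hgy : g y = 0 := by
      rcases mul_eq_zero.mp hgy0 with h | h
      · exact h
      · exact absurd h (ne_of_gt hlv)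
    have hy0 : y = 0 := hyD.2 hgy
    exact ⟨(a : ℝ), a.2, by rw [hxd, hy0, add_zero]⟩

end Normed

theorem exhaustion_criterion {n : ℕ}
    (C : Set (Fin n → ℝ)) (S : Set (Fin n → ℝ)) (hS : S.Finite)
    (hC : C = coneGen S) (hsal : IsSalient C)
    (hfull : Submodule.span ℝ C = ⊤)
    (L : Set (Fin n → ℝ)) (hL : ∀ v ∈ L, IsExtremalVec C v)
    (hne : L.Nonempty)
    (hclosed : ∀ r ∈ L, ∀ s : (Fin n → ℝ) ⧸ Submodule.span ℝ {r},
      IsExtremalVec ((Submodule.span ℝ {r}).mkQ '' C) s →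
        ∃ r' ∈ L, ∃ t : ℝ, 0 < t ∧ (Submodule.span ℝ {r}).mkQ r' = t • s) :
    ∀ v : Fin n → ℝ, IsExtremalVec C v → ∃ w ∈ L, ∃ t : ℝ, 0 < t ∧ w = t • v := by
  classical
  subst hC
  intro v hv
  obtain ⟨l, hl⟩ := exists_pos_functional hS hsal
  obtain ⟨g, hgv, hgprop⟩ := exists_exposing hS hsal l hl hv
  set ρ : (Fin n → ℝ) → ℝ := fun w => g w / l w with hρ
  have hρ_scale : ∀ (u : ℝ), 0 < u → ∀ w, ρ (u • w) = ρ w := by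
    intro u hu w
    simp only [hρ, map_smul, smul_eq_mul]
    rw [mul_div_mul_left _ _ (ne_of_gt hu)]
  have hLval : ∀ w ∈ L, ρ w ∈ ρ '' S := by
    intro w hw
    obtain ⟨q, hqS, u, hu, hq⟩ :=
      extremal_exists_generator (subset_refl (coneGen S)) (hL w hw) ((hL w hw).2.1)
    exact ⟨q, hqS, by rw [hq, hρ_scale u hu]⟩
  have hLfin : (ρ '' L).Finite := by
    apply Set.Finite.subset (hS.image ρ)
    rintro _ ⟨w, hwL, rfl⟩
    exact hLval w hwL
  obtain ⟨m, hm, hmax⟩ := Set.Finite.exists_maximalFor id (ρ '' L) hLfin (hne.image ρ)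
  obtain ⟨r, hrL, hρr⟩ := hm
  have hmle : ∀ w ∈ L, ρ w ≤ ρ r := by
    intro w hw
    by_contra hlt
    push_neg at hlt
    have h1 : m ≤ ρ w := by rw [← hρr]; exact hlt.le
    have := hmax ⟨w, hw, rfl⟩ h1
    rw [← hρr] at this
    simp only [id] at this
    exact absurd hlt (not_lt.mpr this)
  have hrext := hL r hrL
  have hrC : r ∈ coneGen S := hrext.2.1
  have hlr : 0 < l r := hl r hrC hrext.1
  have hlv : 0 < l v := hl v hv.2.1 hv.1
  -- the quotient cone
  have hQ : (Submodule.span ℝ {r}).mkQ '' coneGen S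
      = coneGen ((Submodule.span ℝ {r}).mkQ '' S) := by
    rw [coneGen_eq_span, coneGen_eq_span]
    have h1 := Submodule.map_span
      (((Submodule.span ℝ {r}).mkQ : (Fin n → ℝ) →ₗ[ℝ] _).restrictScalars {c : ℝ // 0 ≤ c}) S
    calc (Submodule.span ℝ {r}).mkQ '' (Submodule.span {c : ℝ // 0 ≤ c} S : Set (Fin n → ℝ))
        = ((Submodule.span {c : ℝ // 0 ≤ c} S).map
            (((Submodule.span ℝ {r}).mkQ : (Fin n → ℝ) →ₗ[ℝ] _).restrictScalars
              {c : ℝ // 0 ≤ c}) : Set _) := by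
          rw [Submodule.map_coe, LinearMap.coe_restrictScalars]
      _ = (Submodule.span {c : ℝ // 0 ≤ c} ((Submodule.span ℝ {r}).mkQ '' S) : Set _) := by
          rw [h1, LinearMap.coe_restrictScalars]
  have hsalQ : IsSalient ((Submodule.span ℝ {r}).mkQ '' coneGen S) :=
    salient_quotient hsal hrext
  set T := (hS.image (Submodule.span ℝ {r}).mkQ).toFinset with hT
  have hTcoe : (T : Set ((Fin n → ℝ) ⧸ Submodule.span ℝ {r})) = (Submodule.span ℝ {r}).mkQ '' S :=
    (hS.image (Submodule.span ℝ {r}).mkQ).coe_toFinset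
  have hsets : coneGen ((T : Set ((Fin n → ℝ) ⧸ Submodule.span ℝ {r}))) = (Submodule.span ℝ {r}).mkQ '' coneGen S := by
    rw [hTcoe, hQ]
  have hsalT : IsSalient (coneGen ((T : Set ((Fin n → ℝ) ⧸ Submodule.span ℝ {r})))) := by rw [hsets]; exact hsalQ
  have hmink := coneGen_subset_coneGen_extremal T hsalT
  have hφv : (Submodule.span ℝ {r}).mkQ v ∈ coneGen ((T : Set ((Fin n → ℝ) ⧸ Submodule.span ℝ {r}))) := by
    rw [hsets]
    exact ⟨v, hv.2.1, rfl⟩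
  obtain ⟨F, c, hFE, hc, hrep⟩ := mem_coneGen_finset (hmink hφv)
  have hqext : ∀ q ∈ F, IsExtremalVec ((Submodule.span ℝ {r}).mkQ '' coneGen S) q := by
    intro q hq
    have := hFE hq
    rwa [Set.mem_setOf_eq, hsets] at this
  have hcl : ∀ q ∈ F, ∃ r' ∈ L, ∃ t : ℝ, 0 < t ∧ (Submodule.span ℝ {r}).mkQ r' = t • q :=
    fun q hq => hclosed r hrL q (hqext q hq)
  choose! r' hr'L t ht hφr' using hcl
  set d : _ → ℝ := fun q => c q / t q with hd
  have hdnn : ∀ q ∈ F, 0 ≤ d q := fun q hq => div_nonneg (hc q) (ht q hq).le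
  have hφsum : (Submodule.span ℝ {r}).mkQ (∑ q ∈ F, d q • r' q)
      = (Submodule.span ℝ {r}).mkQ v := by
    rw [map_sum, hrep]
    refine Finset.sum_congr rfl fun q hq => ?_
    rw [map_smul, hφr' q hq, smul_smul, hd]
    simp only []
    rw [div_mul_cancel₀ _ (ne_of_gt (ht q hq))]
  have hker : v - ∑ q ∈ F, d q • r' q ∈ Submodule.span ℝ {r} := by
    have h0 : (Submodule.span ℝ {r}).mkQ (v - ∑ q ∈ F, d q • r' q) = 0 := by
      rw [map_sub, hφsum, sub_self]
    rwa [Submodule.mkQ_apply, Submodule.Quotient.mk_eq_zero] at h0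
  obtain ⟨α, hα⟩ := Submodule.mem_span_singleton.mp hker
  have hveq : v = (∑ q ∈ F, d q • r' q) + α • r := by rw [hα]; abel
  have hgsum : g v = (∑ q ∈ F, d q * g (r' q)) + α * g r := by
    conv_lhs => rw [hveq]
    rw [map_add, map_sum, map_smul, smul_eq_mul]
    congr 1
    exact Finset.sum_congr rfl fun q _ => by rw [map_smul, smul_eq_mul]
  have hlsum : l v = (∑ q ∈ F, d q * l (r' q)) + α * l r := by
    conv_lhs => rw [hveq]
    rw [map_add, map_sum, map_smul, smul_eq_mul]
    congr 1
    exact Finset.sum_congr rfl fun q _ => by rw [map_smul, smul_eq_mul]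
  have hterm : ∀ q ∈ F, d q * g (r' q) ≤ d q * (ρ r * l (r' q)) := by
    intro q hq
    have hwL := hr'L q hq
    have hwext := hL _ hwL
    have hlw : 0 < l (r' q) := hl _ hwext.2.1 hwext.1
    have hle : ρ (r' q) ≤ ρ r := hmle _ hwL
    have : g (r' q) ≤ ρ r * l (r' q) := by
      rw [hρ] at hle
      simp only [] at hle
      exact (div_le_iff₀ hlw).mp hle
    exact mul_le_mul_of_nonneg_left this (hdnn q hq)
  have hgr : g r = ρ r * l r := by
    rw [hρ]
    simp only []
    rw [div_mul_cancel₀ _ (ne_of_gt hlr)]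
  have hgvle : g v ≤ ρ r * l v := by
    calc g v = (∑ q ∈ F, d q * g (r' q)) + α * g r := hgsum
      _ ≤ (∑ q ∈ F, d q * (ρ r * l (r' q))) + α * g r :=
          add_le_add_left (Finset.sum_le_sum hterm) _
      _ = ρ r * ((∑ q ∈ F, d q * l (r' q)) + α * l r) := by
          rw [mul_add, Finset.mul_sum, hgr]
          congr 1
          · exact Finset.sum_congr rfl fun q _ => by ring
          · ring
      _ = ρ r * l v := by rw [← hlsum]
  have h1 : g v * l r ≤ g r * l v := by
    have := mul_le_mul_of_nonneg_right hgvle hlr.le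
    calc g v * l r ≤ ρ r * l v * l r := this
      _ = (ρ r * l r) * l v := by ring
      _ = g r * l v := by rw [← hgr]
  have h2 : g r * l v ≤ g v * l r := (hgprop r hrC).1
  obtain ⟨τ, hτ0, hτ⟩ := (hgprop r hrC).2 (le_antisymm h2 h1)
  refine ⟨r, hrL, τ, ?_, hτ⟩
  rcases hτ0.lt_or_eq with h | h
  · exact h
  · exfalso
    exact hrext.1 (by rw [hτ, ← h, zero_smul])
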